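/- A connected undirected graph G admits a strongly connected orientation (an assignment of a direction to each edge such that every vertex is reachable from every other by a directed path) if and only if G has no bridge. -/

import Mathlib

open scoped Classical

/-- `H` is an orientation of the simple graph `G`: every edge gets exactly one direction. -/
structure IsOrientation {V : Type*} (G : SimpleGraph V) (H : V → V → Prop) : Prop where
  le_adj : ∀ u v, H u v → G.Adj u v
  total : ∀ u v, G.Adj u v → H u v ∨ H v u
  asymm : ∀ u v, H u v → ¬ H v u

/-- A digraph (given by its arc relation) is strongly connected if every vertex is
reachable from every other by a directed path. -/
def StronglyConnected {V : Type*} (H : V → V → Prop) : Prop :=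
  ∀ u v : V, Relation.ReflTransGen H u v

/-- Directed distance: length of a shortest directed walk from `u` to `v`. -/
noncomputable def ddist {V : Type*} (H : V → V → Prop) (u v : V) : ℕ :=
  sInf {n | ∃ f : ℕ → V, f 0 = u ∧ f n = v ∧ ∀ i < n, H (f i) (f (i + 1))}

/-- Diameter of a digraph on a finite vertex type. -/
noncomputable def ddiam {V : Type*} [Fintype V] (H : V → V → Prop) : ℕ :=
  Finset.univ.sup fun p : V × V => ddist H p.1 p.2

/-- The minimum oriented diameter of a graph. -/
noncomputable def minOrientedDiam {V : Type*} [Fintype V] (G : SimpleGraph V) : ℕ :=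
  sInf {d | ∃ H : V → V → Prop, IsOrientation G H ∧ StronglyConnected H ∧ ddiam H = d}

/-- A graph is bridgeless if no edge is a bridge. -/
def Bridgeless {V : Type*} (G : SimpleGraph V) : Prop :=
  ∀ e : Sym2 V, ¬ G.IsBridge e

/-- `D` is a dominating set of `G`. -/
def Dominating {V : Type*} (G : SimpleGraph V) (D : Set V) : Prop :=
  ∀ v ∉ D, ∃ u ∈ D, G.Adj u v

/-- The domination number of a finite graph. -/
noncomputable def dominationNumber {V : Type*} [Fintype V] (G : SimpleGraph V) : ℕ :=
  sInf {n | ∃ D : Finset V, Dominating G ↑D ∧ D.card = n}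

section RobbinsAux

open Relation SimpleGraph

variable {V : Type*}

/-- Along a walk whose darts are all arcs of `K`, every support vertex reaches the end. -/
private lemma walk_rtg_forward {G : SimpleGraph V} {K : V → V → Prop} :
    ∀ {a b : V} (r : G.Walk a b), (∀ d ∈ r.darts, K d.toProd.1 d.toProd.2) →
      ∀ w ∈ r.support, Relation.ReflTransGen K w b := by
  intro a b r
  induction r with
  | nil =>
    intro _ w hw
    simp only [SimpleGraph.Walk.support_nil, List.mem_singleton] at hw
    subst hw; exact .refl
  | @cons u v c h p ih =>
    intro hd w hw
    simp only [SimpleGraph.Walk.support_cons, List.mem_cons] at hw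
    rcases hw with rfl | hw
    · have h1 : K w v := hd ⟨(w, v), h⟩ (by simp [SimpleGraph.Walk.darts_cons])
      exact Relation.ReflTransGen.head h1
        (ih (fun d hd' => hd d (by simp [SimpleGraph.Walk.darts_cons, hd'])) v
          p.start_mem_support)
    · exact ih (fun d hd' => hd d (by simp [SimpleGraph.Walk.darts_cons, hd'])) w hw

/-- Along a walk whose darts are all arcs of `K`, the start reaches every support vertex. -/
private lemma walk_rtg_backward {G : SimpleGraph V} {K : V → V → Prop} :
    ∀ {a b : V} (r : G.Walk a b), (∀ d ∈ r.darts, K d.toProd.1 d.toProd.2) →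
      ∀ w ∈ r.support, Relation.ReflTransGen K a w := by
  intro a b r
  induction r with
  | nil =>
    intro _ w hw
    simp only [SimpleGraph.Walk.support_nil, List.mem_singleton] at hw
    subst hw; exact .refl
  | @cons u v c h p ih =>
    intro hd w hw
    simp only [SimpleGraph.Walk.support_cons, List.mem_cons] at hw
    rcases hw with rfl | hw
    · exact .refl
    · have h1 : K u v := hd ⟨(u, v), h⟩ (by simp [SimpleGraph.Walk.darts_cons])
      exact Relation.ReflTransGen.head h1
        (ih (fun d hd' => hd d (by simp [SimpleGraph.Walk.darts_cons, hd'])) w hw)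

/-- If a walk starts inside `S` and ends outside, some edge crosses the boundary. -/
private lemma cross_lemma {G : SimpleGraph V} {S : Set V} :
    ∀ {a b : V}, G.Walk a b → a ∈ S → b ∉ S → ∃ x y, x ∈ S ∧ y ∉ S ∧ G.Adj x y := by
  intro a b p
  induction p with
  | nil => exact fun ha hb => absurd ha hb
  | @cons u v c h p ih =>
    intro ha hb
    by_cases hv : v ∈ S
    · exact ih hv hb
    · exact ⟨u, v, ha, hv, h⟩

/-- Truncate a walk at the first vertex belonging to `S`. -/
private lemma trunc_lemma {G : SimpleGraph V} {S : Set V} :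
    ∀ {a b : V}, G.Walk a b → b ∈ S →
      ∃ z, z ∈ S ∧ ∃ q : G.Walk a z, ∀ w ∈ q.support, w ≠ z → w ∉ S := by
  intro a b p
  induction p with
  | nil =>
    intro hb
    exact ⟨_, hb, .nil, fun w hw hne =>
      absurd (by simpa using hw) hne⟩
  | @cons u v c h p ih =>
    intro hb
    by_cases hu : u ∈ S
    · exact ⟨u, hu, .nil, fun w hw hne => absurd (by simpa using hw) hne⟩
    · obtain ⟨z, hz, q, hq⟩ := ih hb
      refine ⟨z, hz, .cons h q, ?_⟩
      intro x hx hne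
      simp only [SimpleGraph.Walk.support_cons, List.mem_cons] at hx
      rcases hx with rfl | hx
      · exact hu
      · exact hq x hx hne

end RobbinsAux
open Relation SimpleGraph in
/-- One ear-extension step: grow the strongly oriented region. -/
private lemma grow_step {V : Type*} [Fintype V] [DecidableEq V] (G : SimpleGraph V)
    (hconn : G.Connected) (hbl : Bridgeless G)
    (S : Finset V) (H : V → V → Prop) (hS : S.Nonempty) (hSne : S ≠ Finset.univ)
    (h1 : ∀ u v, H u v → G.Adj u v) (h2 : ∀ u v, H u v → u ∈ S ∧ v ∈ S)
    (h3 : ∀ u v, H u v → ¬ H v u)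
    (h4 : ∀ u ∈ S, ∀ v ∈ S, Relation.ReflTransGen H u v) :
    ∃ (S' : Finset V) (H' : V → V → Prop), S.card < S'.card ∧
      (∀ u v, H' u v → G.Adj u v) ∧ (∀ u v, H' u v → u ∈ S' ∧ v ∈ S') ∧
      (∀ u v, H' u v → ¬ H' v u) ∧
      (∀ u ∈ S', ∀ v ∈ S', Relation.ReflTransGen H' u v) := by
  -- find a crossing edge x ∈ S, y ∉ S
  obtain ⟨b, hb⟩ : ∃ b, b ∉ S := by
    by_contra hc
    push_neg at hc
    exact hSne (Finset.eq_univ_iff_forall.mpr hc)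
  obtain ⟨a, ha⟩ := hS
  obtain ⟨p⟩ := hconn.preconnected a b
  obtain ⟨x, y, hxS, hyS, hadj⟩ :=
    cross_lemma (S := (↑S : Set V)) p (Finset.mem_coe.mpr ha) (by simpa using hb)
  replace hxS : x ∈ S := Finset.mem_coe.mp hxS
  replace hyS : y ∉ S := fun h => hyS (Finset.mem_coe.mpr h)
  -- the edge is not a bridge, so there is a walk from y to x avoiding it
  set G' : SimpleGraph V := G \ SimpleGraph.fromEdgeSet {s(x, y)} with hG'
  have hreach : G'.Reachable x y := by
    have := hbl s(x, y)
    rw [SimpleGraph.isBridge_iff] at this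
    push_neg at this
    exact this
  obtain ⟨p'⟩ := hreach.symm
  obtain ⟨z, hzS, q0, hq0⟩ := trunc_lemma (S := (↑S : Set V)) p' (Finset.mem_coe.mpr hxS)
  replace hzS : z ∈ S := Finset.mem_coe.mp hzS
  set q : G'.Walk y z := q0.bypass with hq_def
  have hqpath : q.IsPath := q0.bypass_isPath
  have hq : ∀ w ∈ q.support, w ≠ z → w ∉ S := fun w hw hne => by
    have := hq0 w (q0.support_bypass_subset hw) hne
    simpa using this
  have hyz : y ≠ z := fun h => hyS (h ▸ hzS)
  -- basic facts about G'
  have hG'le : ∀ u v, G'.Adj u v → G.Adj u v := fun u v h => h.1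
  have hG'ne : ∀ u v, G'.Adj u v → ¬(s(u, v) = s(x, y)) := by
    intro u v h hc
    exact h.2 ((SimpleGraph.fromEdgeSet_adj _).mpr ⟨by simp [hc], h.1.ne⟩)
  -- no dart of q points from z, and all dart sources lie outside S
  have hz_not_fst : z ∉ q.darts.map (·.toProd.1) := by
    have hn := hqpath.support_nodup
    rw [← q.map_fst_darts_append] at hn
    intro hz'
    exact (List.nodup_append'.mp hn).2.2 hz' (List.mem_singleton.mpr rfl)
  have hdart_fst : ∀ d ∈ q.darts, d.toProd.1 ∉ S := by
    intro d hd
    refine hq d.toProd.1 (q.dart_fst_mem_support_of_mem_darts hd) ?_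
    intro hc
    have hmem := List.mem_map_of_mem (f := fun d : G'.Dart => d.toProd.1) hd
    exact hz_not_fst (by simpa only [hc] using hmem)
  have hdart_norev : ∀ d ∈ q.darts, ∀ d' ∈ q.darts,
      d'.toProd.1 = d.toProd.2 → d'.toProd.2 = d.toProd.1 → False := by
    intro d hd d' hd' h1' h2'
    have hnodup : (q.darts.map SimpleGraph.Dart.edge).Nodup := hqpath.isTrail.edges_nodup
    have heq : d.edge = d'.edge := by
      simp only [SimpleGraph.Dart.edge]
      rw [show d'.toProd = (d.toProd.2, d.toProd.1) from Prod.ext h1' h2']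
      exact Sym2.eq_swap
    have heqd := List.inj_on_of_nodup_map hnodup hd hd' heq
    rw [← heqd] at h1'
    exact d.adj.ne h1'
  -- the new region and orientation
  refine ⟨S ∪ q.support.toFinset,
    (fun u v => H u v ∨ (u = x ∧ v = y) ∨ ∃ d ∈ q.darts, d.toProd = (u, v)), ?_, ?_, ?_, ?_, ?_⟩
  · -- cardinality increases
    apply Finset.card_lt_card
    constructor
    · exact Finset.subset_union_left
    · intro hsub
      exact hyS (hsub (Finset.mem_union_right _ (List.mem_toFinset.mpr q.start_mem_support)))
  · -- arcs are edges of G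
    rintro u v (h | ⟨rfl, rfl⟩ | ⟨d, hd, hdp⟩)
    · exact h1 u v h
    · exact hadj
    · have := d.adj
      rw [hdp] at this
      exact hG'le u v this
  · -- arcs stay inside S'
    rintro u v (h | ⟨rfl, rfl⟩ | ⟨d, hd, hdp⟩)
    · exact ⟨Finset.mem_union_left _ (h2 u v h).1, Finset.mem_union_left _ (h2 u v h).2⟩
    · exact ⟨Finset.mem_union_left _ hxS,
        Finset.mem_union_right _ (List.mem_toFinset.mpr q.start_mem_support)⟩
    · constructor
      · exact Finset.mem_union_right _ (List.mem_toFinset.mpr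
          (by rw [show u = d.toProd.1 from (congrArg Prod.fst hdp).symm];
              exact q.dart_fst_mem_support_of_mem_darts hd))
      · exact Finset.mem_union_right _ (List.mem_toFinset.mpr
          (by rw [show v = d.toProd.2 from (congrArg Prod.snd hdp).symm];
              exact q.dart_snd_mem_support_of_mem_darts hd))
  · -- asymmetry
    rintro u v (h | ⟨rfl, rfl⟩ | ⟨d, hd, hdp⟩) (h' | ⟨he1, he2⟩ | ⟨d', hd', hdp'⟩)
    · exact h3 u v h h'
    · subst he1; subst he2; exact hyS (h2 _ _ h).1
    · have : d'.toProd.1 ∉ S := hdart_fst d' hd'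
      rw [hdp'] at this
      exact this (h2 u v h).2
    · exact hyS (h2 _ _ h').1
    · exact hadj.ne' he1
    · have := d'.adj
      rw [hdp'] at this
      exact hG'ne _ _ this (Sym2.eq_swap)
    · have : d.toProd.1 ∉ S := hdart_fst d hd
      rw [hdp] at this
      exact this (h2 v u h').2
    · have hGadj : G'.Adj u v := by
        have := d.adj
        rw [hdp] at this
        exact this
      refine hG'ne u v hGadj ?_
      rw [he1, he2]
      exact Sym2.eq_swap
    · exact hdart_norev d hd d' hd'
        (by rw [hdp, hdp']) (by rw [hdp, hdp'])
  · -- strong connectivity on S'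
    set K : V → V → Prop :=
      fun u v => H u v ∨ (u = x ∧ v = y) ∨ ∃ d ∈ q.darts, d.toProd = (u, v) with hK
    have harc : ∀ d ∈ q.darts, K d.toProd.1 d.toProd.2 :=
      fun d hd => Or.inr (Or.inr ⟨d, hd, rfl⟩)
    have hfwd := walk_rtg_forward (K := K) q harc
    have hbwd := walk_rtg_backward (K := K) q harc
    have hSS : ∀ c ∈ S, ∀ w ∈ S, Relation.ReflTransGen K c w :=
      fun c hc w hw => Relation.ReflTransGen.mono (fun _ _ h => Or.inl h) c w (h4 c hc w hw)
    intro u hu v hv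
    have hreachS : ∃ s ∈ S, Relation.ReflTransGen K u s := by
      rcases Finset.mem_union.mp hu with h | h
      · exact ⟨u, h, .refl⟩
      · exact ⟨z, hzS, hfwd u (List.mem_toFinset.mp h)⟩
    obtain ⟨s, hs, hus⟩ := hreachS
    refine hus.trans ?_
    rcases Finset.mem_union.mp hv with h | h
    · exact hSS s hs v h
    · exact (hSS s hs x hxS).trans
        (Relation.ReflTransGen.head (Or.inr (Or.inl ⟨rfl, rfl⟩))
          (hbwd v (List.mem_toFinset.mp h)))

/-- Iterate the ear-extension until the region is all of `V`. -/
private lemma extend_to_univ {V : Type*} [Fintype V] [DecidableEq V] (G : SimpleGraph V)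
    (hconn : G.Connected) (hbl : Bridgeless G) :
    ∀ (n : ℕ) (S : Finset V) (H : V → V → Prop), Fintype.card V ≤ S.card + n →
      S.Nonempty →
      (∀ u v, H u v → G.Adj u v) → (∀ u v, H u v → u ∈ S ∧ v ∈ S) →
      (∀ u v, H u v → ¬ H v u) →
      (∀ u ∈ S, ∀ v ∈ S, Relation.ReflTransGen H u v) →
      ∃ H' : V → V → Prop, (∀ u v, H' u v → G.Adj u v) ∧
        (∀ u v, H' u v → ¬ H' v u) ∧ StronglyConnected H' := by
  intro n
  induction n with
  | zero =>
    intro S H hcard hS h1 h2 h3 h4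
    have hu : S = Finset.univ := by
      apply Finset.eq_univ_of_card
      have := Finset.card_le_univ S
      omega
    subst hu
    exact ⟨H, h1, h3, fun u v => h4 u (Finset.mem_univ u) v (Finset.mem_univ v)⟩
  | succ n ih =>
    intro S H hcard hS h1 h2 h3 h4
    by_cases hu : S = Finset.univ
    · subst hu
      exact ⟨H, h1, h3, fun u v => h4 u (Finset.mem_univ u) v (Finset.mem_univ v)⟩
    · obtain ⟨S', H', hlt, h1', h2', h3', h4'⟩ :=
        grow_step G hconn hbl S H hS hu h1 h2 h3 h4
      have hS' : S'.Nonempty := by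
        rw [← Finset.card_pos]
        omega
      exact ih S' H' (by omega) hS' h1' h2' h3' h4'

open SimpleGraph in
/-- Forward direction: a strongly connected orientation forbids bridges. -/
private lemma orient_no_bridge {V : Type*} {G : SimpleGraph V} {H : V → V → Prop}
    (hor : IsOrientation G H) (hsc : StronglyConnected H) : Bridgeless G := by
  have key : ∀ a b : V, H a b →
      (G \ SimpleGraph.fromEdgeSet {s(a, b)}).Reachable a b := by
    intro a b hab
    have main : ∀ w, Relation.ReflTransGen H b w →
        (G \ SimpleGraph.fromEdgeSet {s(a, b)}).Reachable b w ∨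
        (G \ SimpleGraph.fromEdgeSet {s(a, b)}).Reachable b a := by
      intro w hw
      induction hw with
      | refl => exact Or.inl (SimpleGraph.Reachable.refl _)
      | @tail c d hbc hcd ih =>
        by_cases hcase : c = a ∧ d = b
        · rcases hcase with ⟨-, h2⟩
          subst h2
          exact Or.inl (SimpleGraph.Reachable.refl _)
        · have hne : s(c, d) ≠ s(a, b) := by
            intro hc
            rcases Sym2.eq_iff.mp hc with ⟨h1, h2⟩ | ⟨h1, h2⟩
            · exact hcase ⟨h1, h2⟩
            · subst h1; subst h2
              exact hor.asymm _ _ hab hcd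
          have hadj' : (G \ SimpleGraph.fromEdgeSet {s(a, b)}).Adj c d := by
            refine ⟨hor.le_adj c d hcd, ?_⟩
            intro hc
            rw [SimpleGraph.fromEdgeSet_adj] at hc
            exact hne (Set.mem_singleton_iff.mp hc.1)
          rcases ih with hl | hr
          · exact Or.inl (hl.trans hadj'.reachable)
          · exact Or.inr hr
    rcases main a (hsc b a) with hl | hr
    · exact hl.symm
    · exact hr.symm
  intro e
  induction e using Sym2.ind with
  | _ u v =>
    rw [SimpleGraph.isBridge_iff]
    intro hnr
    by_cases hadj : G.Adj u v
    swap
    · apply hnr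
      have gen : ∀ w, Relation.ReflTransGen H u w →
          (G.deleteEdges {s(u, v)}).Reachable u w := by
        intro w hw
        induction hw with
        | refl => exact SimpleGraph.Reachable.refl _
        | @tail c d _ hcd ih =>
          refine ih.trans (SimpleGraph.Adj.reachable ?_)
          rw [SimpleGraph.deleteEdges_adj]
          refine ⟨hor.le_adj c d hcd, fun hc => hadj ?_⟩
          rcases Sym2.eq_iff.mp (Set.mem_singleton_iff.mp hc) with ⟨rfl, rfl⟩ | ⟨rfl, rfl⟩
          · exact hor.le_adj _ _ hcd
          · exact (hor.le_adj _ _ hcd).symm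
      exact gen v (hsc u v)
    rcases hor.total u v hadj with h | h
    · exact hnr (key u v h)
    · have := key v u h
      rw [show s(v, u) = s(u, v) from Sym2.eq_swap] at this
      exact hnr this.symm
/-- **Robbins' theorem.** A finite connected graph admits a strongly connected
orientation iff it has no bridge. -/
theorem robbins_orientation {V : Type*} [Fintype V] (G : SimpleGraph V)
    (hconn : G.Connected) :
    (∃ H : V → V → Prop, IsOrientation G H ∧ StronglyConnected H) ↔ Bridgeless G := by
  classical
  constructor
  · rintro ⟨H, hor, hsc⟩
    exact orient_no_bridge hor hsc
  · intro hbl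
    obtain ⟨v0⟩ := hconn.nonempty
    obtain ⟨H, h1, h3, hsc⟩ := extend_to_univ G hconn hbl (Fintype.card V)
      {v0} (fun _ _ => False) (by simp) (Finset.singleton_nonempty v0)
      (fun _ _ h => h.elim) (fun _ _ h => h.elim) (fun _ _ h => h.elim)
      (by
        intro u hu v hv
        rw [Finset.mem_singleton] at hu hv
        subst hu; subst hv
        exact Relation.ReflTransGen.refl)
    refine ⟨fun u v => H u v ∨ (G.Adj u v ∧ ¬H u v ∧ ¬H v u ∧ WellOrderingRel u v),
      ⟨?_, ?_, ?_⟩, ?_⟩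
    · rintro u v (h | ⟨h, -, -, -⟩)
      · exact h1 u v h
      · exact h
    · intro u v hadj
      by_cases huv : H u v
      · exact Or.inl (Or.inl huv)
      by_cases hvu : H v u
      · exact Or.inr (Or.inl hvu)
      rcases trichotomous_of WellOrderingRel u v with h | h | h
      · exact Or.inl (Or.inr ⟨hadj, huv, hvu, h⟩)
      · exact absurd h hadj.ne
      · exact Or.inr (Or.inr ⟨hadj.symm, hvu, huv, h⟩)
    · rintro u v (h | ⟨ha, hn1, hn2, hr⟩) (h' | ⟨ha', hn1', hn2', hr'⟩)
      · exact h3 u v h h'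
      · exact hn2' h
      · exact hn2 h'
      · exact (IsWellFounded.wf (r := WellOrderingRel)).asymmetric u v hr hr'
    · intro u v
      exact Relation.ReflTransGen.mono (fun a b h => Or.inl h) u v (hsc u v)
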